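/- Fix p ∈ F with p ≠ 0 and p ≠ 1. Let 𝓛 denote the quotient of the free Lie algebra over F on two generators u, v by the Lie ideal generated by the elements [u,[u,v]] − 4(2p−1)u − 4v and [v,[v,u]] − 4(2p−1)v − 4u. Then 𝓛 is isomorphic to sl₂(F) as a Lie algebra over F. -/

import Mathlib

open Matrix LieAlgebra.SpecialLinear FreeLieAlgebra

section Stmt9Aux

variable {F : Type*} [Field F]

/-- An element of `sl₂` from its three free entries. -/
def stmt9m2 (α β γ : F) : sl (Fin 2) F :=
  ⟨!![α, β; γ, -α], show _ ∈ LinearMap.ker (Matrix.traceLinearMap (Fin 2) F F) by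
    rw [LinearMap.mem_ker]
    simp [Matrix.trace, Matrix.diag, Fin.sum_univ_two]⟩

@[simp] theorem stmt9_val_smul (c : F) (A : sl (Fin 2) F) (i j : Fin 2) :
    (c • A).val i j = c * A.val i j := rfl

theorem stmt9_sl2_trace (A : sl (Fin 2) F) : A.val 1 1 = - A.val 0 0 := by
  have h : Matrix.trace A.val = 0 := A.2
  rw [Matrix.trace, Fin.sum_univ_two] at h
  simp only [Matrix.diag_apply] at h
  linear_combination h

/-- The quotient map by a Lie ideal, as a morphism of Lie algebras. -/
def stmt9mk {L : Type*} [LieRing L] [LieAlgebra F L] (I : LieIdeal F L) :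
    L →ₗ⁅F⁆ L ⧸ I :=
  { (I : Submodule F L).mkQ with map_lie' := rfl }

theorem stmt9mk_eq_zero {L : Type*} [LieRing L] [LieAlgebra F L] (I : LieIdeal F L)
    (x : L) : stmt9mk I x = 0 ↔ x ∈ I :=
  Submodule.Quotient.mk_eq_zero _

/-- Any Lie subalgebra of a quotient of the free Lie algebra on two generators that contains
the images of the two generators contains the image of everything. -/
theorem stmt9_gen {L : Type*} [LieRing L] [LieAlgebra F L]
    (f : FreeLieAlgebra F (Fin 2) →ₗ⁅F⁆ L) (S : LieSubalgebra F L)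
    (h0 : f (of F 0) ∈ S) (h1 : f (of F 1) ∈ S) (t : FreeLieAlgebra F (Fin 2)) :
    f t ∈ S := by
  let g : FreeLieAlgebra F (Fin 2) →ₗ⁅F⁆ S :=
    lift F ![(⟨f (of F 0), h0⟩ : S), ⟨f (of F 1), h1⟩]
  have hcomp : S.incl.comp g = f := by
    apply hom_ext
    intro x
    fin_cases x <;> simp [g, lift_of_apply]
  rw [← hcomp]
  exact (g t).2

end Stmt9Aux

set_option maxHeartbeats 1000000 in
/-- Fix `p ∈ F` with `p ≠ 0`, `p ≠ 1`.  The quotient of the free Lie algebra over `F` on two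
generators `u, v` by the Lie ideal generated by `[u,[u,v]] − 4(2p−1)u − 4v` and
`[v,[v,u]] − 4(2p−1)v − 4u` is isomorphic to `sl₂(F)` as a Lie algebra over `F`. -/
theorem stmt9 (F : Type*) [Field F] [IsAlgClosed F] (hchar : (2 : F) ≠ 0)
    (p : F) (hp0 : p ≠ 0) (hp1 : p ≠ 1) :
    ∀ (u v : FreeLieAlgebra F (Fin 2)), u = FreeLieAlgebra.of F 0 → v = FreeLieAlgebra.of F 1 →
    ∀ I : LieIdeal F (FreeLieAlgebra F (Fin 2)),
      I = LieSubmodule.lieSpan F (FreeLieAlgebra F (Fin 2))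
        {⁅u, ⁅u, v⁆⁆ - (4 * (2 * p - 1)) • u - (4 : F) • v,
         ⁅v, ⁅v, u⁆⁆ - (4 * (2 * p - 1)) • v - (4 : F) • u} →
      Nonempty ((FreeLieAlgebra F (Fin 2) ⧸ I) ≃ₗ⁅F⁆ sl (Fin 2) F) := by
  intro u v hu hv I hI
  have h4 : (4 : F) ≠ 0 := by
    intro h; apply hchar
    have h22 : (2 : F) * 2 = 4 := by norm_num
    rcases mul_eq_zero.mp (h22.trans h) with h' | h' <;> exact h'
  have hy : (4 : F) * p * (1 - p) ≠ 0 :=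
    mul_ne_zero (mul_ne_zero h4 hp0) (sub_ne_zero.mpr (Ne.symm hp1))
  -- the special elements of sl₂
  set U : sl (Fin 2) F := stmt9m2 1 0 0 with hU
  set V : sl (Fin 2) F := stmt9m2 (1 - 2*p) 1 (4*p*(1-p)) with hV
  set W : sl (Fin 2) F := stmt9m2 0 2 (-(2*(4*p*(1-p)))) with hW
  -- relations among U, V, W in sl₂
  have relW : ⁅U, V⁆ = W := by
    apply Subtype.ext
    show U.val * V.val - V.val * U.val = W.val
    ext i j
    fin_cases i <;> fin_cases j <;>
      simp [hU, hV, hW, stmt9m2, Matrix.mul_apply, Fin.sum_univ_two] <;> ring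
  have relUW : ⁅U, W⁆ = (4 * (2 * p - 1)) • U + (4 : F) • V := by
    apply Subtype.ext
    show U.val * W.val - W.val * U.val = ((4 * (2 * p - 1)) • U + (4 : F) • V).val
    ext i j
    fin_cases i <;> fin_cases j <;>
      simp [hU, hV, hW, stmt9m2, Matrix.mul_apply, Fin.sum_univ_two] <;> ring
  have relVW : ⁅V, W⁆ = -((4 : F) • U) - (4 * (2 * p - 1)) • V := by
    apply Subtype.ext
    show V.val * W.val - W.val * V.val = (-((4 : F) • U) - (4 * (2 * p - 1)) • V).val
    ext i j
    fin_cases i <;> fin_cases j <;>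
      simp [hU, hV, hW, stmt9m2, Matrix.mul_apply, Fin.sum_univ_two] <;> ring
  -- the morphism from the free Lie algebra to sl₂
  set φ : FreeLieAlgebra F (Fin 2) →ₗ⁅F⁆ sl (Fin 2) F :=
    lift F ![U, V] with hφ
  have hφu : φ u = U := by rw [hu]; simp [hφ, lift_of_apply]
  have hφv : φ v = V := by rw [hv]; simp [hφ, lift_of_apply]
  -- the ideal is contained in the kernel of φ
  have hIker : I ≤ φ.ker := by
    rw [hI, LieSubmodule.lieSpan_le]
    rintro x hx
    rcases hx with rfl | hx
    · rw [SetLike.mem_coe, LieHom.mem_ker]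
      rw [map_sub φ, map_sub φ, map_smul φ, map_smul φ, φ.map_lie, φ.map_lie, hφu, hφv, relW, relUW]
      abel
    · rcases hx with rfl
      rw [SetLike.mem_coe, LieHom.mem_ker]
      rw [map_sub φ, map_sub φ, map_smul φ, map_smul φ, φ.map_lie, φ.map_lie, hφu, hφv]
      have hVU : ⁅V, U⁆ = -W := by rw [← lie_skew, relW]
      rw [hVU, lie_neg, relVW]
      module
  -- the induced morphism on the quotient
  set q : (FreeLieAlgebra F (Fin 2) ⧸ I) →ₗ⁅F⁆ sl (Fin 2) F :=
    { (I : Submodule F (FreeLieAlgebra F (Fin 2))).liftQ φ.toLinearMap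
        (fun x hx => LieHom.mem_ker.mp (hIker hx)) with
      map_lie' := by
        intro x y
        obtain ⟨x, rfl⟩ := Submodule.Quotient.mk_surjective _ x
        obtain ⟨y, rfl⟩ := Submodule.Quotient.mk_surjective _ y
        show φ ⁅x, y⁆ = ⁅φ x, φ y⁆
        exact φ.map_lie x y } with hq
  -- images of the generators in the quotient
  set ub := stmt9mk I u with hub
  set vb := stmt9mk I v with hvb
  set wb : FreeLieAlgebra F (Fin 2) ⧸ I := ⁅ub, vb⁆ with hwb
  have hqub : q ub = U := hφu
  have hqvb : q vb = V := hφv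
  have hqwb : q wb = W := by
    show φ ⁅u, v⁆ = W
    rw [φ.map_lie, hφu, hφv, relW]
  have hwb' : wb = stmt9mk I ⁅u, v⁆ := rfl
  -- the relations in the quotient
  have h2 : ⁅ub, wb⁆ = (4 * (2 * p - 1)) • ub + (4 : F) • vb := by
    have hmem : ⁅u, ⁅u, v⁆⁆ - (4 * (2 * p - 1)) • u - (4 : F) • v ∈ I := by
      rw [hI]; exact LieSubmodule.subset_lieSpan (by left; rfl)
    have h0 := (stmt9mk_eq_zero I _).mpr hmem
    rw [map_sub (stmt9mk I), map_sub (stmt9mk I), map_smul (stmt9mk I), map_smul (stmt9mk I), (stmt9mk I).map_lie, (stmt9mk I).map_lie] at h0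
    rw [sub_sub, sub_eq_zero] at h0
    rw [← hub, ← hvb, ← hwb] at h0
    exact h0
  have h3 : ⁅vb, wb⁆ = -((4 : F) • ub) - (4 * (2 * p - 1)) • vb := by
    have hmem : ⁅v, ⁅v, u⁆⁆ - (4 * (2 * p - 1)) • v - (4 : F) • u ∈ I := by
      rw [hI]; exact LieSubmodule.subset_lieSpan (by right; rfl)
    have h0 := (stmt9mk_eq_zero I _).mpr hmem
    rw [map_sub (stmt9mk I), map_sub (stmt9mk I), map_smul (stmt9mk I), map_smul (stmt9mk I), (stmt9mk I).map_lie, (stmt9mk I).map_lie] at h0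
    rw [sub_sub, sub_eq_zero] at h0
    rw [← hub, ← hvb] at h0
    have hvu : ⁅vb, ub⁆ = -wb := by rw [← lie_skew, hwb]
    rw [hvu, lie_neg] at h0
    rw [← neg_eq_iff_eq_neg.mpr h0.symm]
    module
  -- the span of ub, vb, wb is a Lie subalgebra
  set sp : Submodule F (FreeLieAlgebra F (Fin 2) ⧸ I) :=
    Submodule.span F {ub, vb, wb} with hsp
  have hubm : ub ∈ sp := Submodule.subset_span (by left; rfl)
  have hvbm : vb ∈ sp := Submodule.subset_span (by right; left; rfl)
  have hwbm : wb ∈ sp := Submodule.subset_span (by right; right; rfl)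
  have hbase : ∀ m ∈ ({ub, vb, wb} : Set _), ∀ n ∈ ({ub, vb, wb} : Set _), ⁅m, n⁆ ∈ sp := by
    have hvu : ⁅vb, ub⁆ = -wb := by rw [← lie_skew, hwb]
    have hwu : ⁅wb, ub⁆ = -((4 * (2 * p - 1)) • ub + (4 : F) • vb) := by rw [← lie_skew, h2]
    have hwv : ⁅wb, vb⁆ = -(-((4 : F) • ub) - (4 * (2 * p - 1)) • vb) := by rw [← lie_skew, h3]
    rintro m (rfl | rfl | rfl) n (rfl | rfl | rfl)
    · rw [lie_self]; exact sp.zero_mem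
    · rw [← hwb]; exact hwbm
    · rw [h2]; exact sp.add_mem (sp.smul_mem _ hubm) (sp.smul_mem _ hvbm)
    · rw [hvu]; exact sp.neg_mem hwbm
    · rw [lie_self]; exact sp.zero_mem
    · rw [h3]; exact sp.sub_mem (sp.neg_mem (sp.smul_mem _ hubm)) (sp.smul_mem _ hvbm)
    · rw [hwu]; exact sp.neg_mem (sp.add_mem (sp.smul_mem _ hubm) (sp.smul_mem _ hvbm))
    · rw [hwv]; exact sp.neg_mem (sp.sub_mem (sp.neg_mem (sp.smul_mem _ hubm)) (sp.smul_mem _ hvbm))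
    · rw [lie_self]; exact sp.zero_mem
  have hlie : ∀ x ∈ sp, ∀ y ∈ sp, ⁅x, y⁆ ∈ sp := by
    intro x hx
    induction hx using Submodule.span_induction with
    | mem m hm =>
      intro y hy
      induction hy using Submodule.span_induction with
      | mem n hn => exact hbase m hm n hn
      | zero => simpa using sp.zero_mem
      | add n₁ n₂ _ _ ih1 ih2 => rw [lie_add]; exact sp.add_mem ih1 ih2
      | smul t n _ ih => rw [lie_smul]; exact sp.smul_mem t ih
    | zero => intro y hy; simpa using sp.zero_mem
    | add x₁ x₂ _ _ ih1 ih2 =>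
      intro y hy; rw [add_lie]; exact sp.add_mem (ih1 y hy) (ih2 y hy)
    | smul t x _ ih =>
      intro y hy; rw [smul_lie]; exact sp.smul_mem t (ih y hy)
  set S : LieSubalgebra F (FreeLieAlgebra F (Fin 2) ⧸ I) :=
    { sp with lie_mem' := fun {x y} hx hy => hlie x hx y hy } with hS
  -- every element of the quotient lies in the span
  have hall : ∀ x : FreeLieAlgebra F (Fin 2) ⧸ I, x ∈ sp := by
    intro x
    obtain ⟨t, rfl⟩ := Submodule.Quotient.mk_surjective _ x
    have := stmt9_gen (stmt9mk I) S (by rw [← hu]; exact hubm) (by rw [← hv]; exact hvbm) t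
    exact this
  -- injectivity of q
  have hinj : Function.Injective q := by
    rw [← LieHom.ker_eq_bot]
    rw [LieSubmodule.eq_bot_iff]
    intro x hx
    have hx0 : q x = 0 := LieHom.mem_ker.mp hx
    have hxsp := hall x
    rw [hsp, Submodule.mem_span_insert] at hxsp
    obtain ⟨a, z₁, hz₁, rfl⟩ := hxsp
    rw [Submodule.mem_span_insert] at hz₁
    obtain ⟨b, z₂, hz₂, rfl⟩ := hz₁
    rw [Submodule.mem_span_singleton] at hz₂
    obtain ⟨c, rfl⟩ := hz₂
    rw [map_add q, map_add q, map_smul q, map_smul q, map_smul q, hqub, hqvb, hqwb] at hx0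
    have hval := congrArg Subtype.val hx0
    have e01 := congrFun (congrFun hval 0) 1
    have e10 := congrFun (congrFun hval 1) 0
    have e00 := congrFun (congrFun hval 0) 0
    simp [hU, hV, hW, stmt9m2] at e01 e10 e00
    -- solve the linear system
    have hb2c : b + 2 * c = 0 := by linear_combination e01
    have hb2c' : b - 2 * c = 0 := by
      have : (4*p*(1-p)) * (b - 2*c) = 0 := by linear_combination e10
      rcases mul_eq_zero.mp this with h' | h'
      · exact absurd h' hy
      · exact h'
    have hc : c = 0 := by
      have h2c : (4 : F) * c = 0 := by linear_combination hb2c - hb2c'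
      rcases mul_eq_zero.mp h2c with h' | h'
      · exact absurd h' h4
      · exact h'
    have hb : b = 0 := by linear_combination hb2c - 2 * hc
    have ha : a = 0 := by linear_combination e00 - (1 - 2*p) * hb
    rw [ha, hb, hc]
    simp
  -- surjectivity of q
  have hsurj : Function.Surjective q := by
    intro A
    refine ⟨(A.val 0 0 - (1-2*p) * ((A.val 0 1 + A.val 1 0 / (4*p*(1-p))) / 2)) • ub
      + ((A.val 0 1 + A.val 1 0 / (4*p*(1-p))) / 2) • vb
      + ((A.val 0 1 - A.val 1 0 / (4*p*(1-p))) / 4) • wb, ?_⟩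
    rw [map_add q, map_add q, map_smul q, map_smul q, map_smul q, hqub, hqvb, hqwb]
    apply Subtype.ext
    ext i j
    have htr := stmt9_sl2_trace A
    fin_cases i <;> fin_cases j <;>
      simp [hU, hV, hW, stmt9m2] <;>
      field_simp <;>
      ring_nf <;>
      first
        | rfl
        | (rw [htr]; ring)
        | linear_combination (4*p*(1-p)) * htr
  exact ⟨LieEquiv.ofBijective q ⟨hinj, hsurj⟩⟩
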